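/- Let H be a complex Hilbert space and let A be a bounded self-adjoint operator on H; for s ∈ ℝ write cos(sA) := (exp(isA) + exp(-isA))/2, where exp denotes the exponential in the Banach algebra of bounded operators on H. Let ψ : ℝ → ℂ be a Schwartz function with ∫_ℝ ψ(σ) dσ = 1 and ∫_ℝ σ^k ψ(σ) dσ = 0 for every integer k ≥ 1, let c > 0, let φ : ℝ → ℂ be a bounded continuous function with support contained in [−2c, 2c] and with φ(s) = 1 for all s ∈ (−c, c), and for ε ∈ (0,1] define the bounded operator T_ε := ∫_ℝ φ(s) ε^{-1} ψ(s/ε) cos(sA) ds (Bochner integral). Then for every u ∈ H and every natural number m, ‖T_ε u − u‖ = O(ε^m) as ε → 0. -/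

import Mathlib

open MeasureTheory Filter Topology Asymptotics

lemma powApply_norm_le {H : Type*} [NormedAddCommGroup H] [NormedSpace ℂ H]
    (B : H →L[ℂ] H) (u : H) : ∀ n : ℕ, ‖(B ^ n) u‖ ≤ ‖B‖ ^ n * ‖u‖ := by
  intro n
  induction n with
  | zero => simp
  | succ n ih =>
    rw [pow_succ']
    calc ‖(B * B ^ n) u‖ = ‖B ((B ^ n) u)‖ := rfl
      _ ≤ ‖B‖ * ‖(B ^ n) u‖ := B.le_opNorm _
      _ ≤ ‖B‖ * (‖B‖ ^ n * ‖u‖) := by gcongr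
      _ = ‖B‖ ^ (n + 1) * ‖u‖ := by ring

set_option maxHeartbeats 1000000 in
lemma exp_apply_rem {H : Type*} [NormedAddCommGroup H] [NormedSpace ℂ H] [CompleteSpace H]
    (B : H →L[ℂ] H) (u : H) (N : ℕ) :
    ‖NormedSpace.exp B u - ∑ n ∈ Finset.range N, ((n.factorial : ℂ))⁻¹ • (B ^ n) u‖
      ≤ ‖B‖ ^ N / (N.factorial : ℝ) * Real.exp ‖B‖ * ‖u‖ := by
  set f : ℕ → H := fun n => ((n.factorial : ℂ))⁻¹ • (B ^ n) u with hf
  have hfg : ∀ n : ℕ, ‖f n‖ ≤ ‖B‖ ^ n / n.factorial * ‖u‖ := by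
    intro n
    calc ‖f n‖ = (n.factorial : ℝ)⁻¹ * ‖(B ^ n) u‖ := by
          rw [hf, norm_smul, norm_inv, Complex.norm_natCast]
      _ ≤ (n.factorial : ℝ)⁻¹ * (‖B‖ ^ n * ‖u‖) := by
          gcongr
          exact powApply_norm_le B u n
      _ = ‖B‖ ^ n / n.factorial * ‖u‖ := by ring
  have hgsum : Summable (fun n : ℕ => ‖B‖ ^ n / n.factorial * ‖u‖) :=
    (Real.summable_pow_div_factorial ‖B‖).mul_right _
  have hnormsum : Summable (fun n => ‖f n‖) :=
    hgsum.of_nonneg_of_le (fun n => norm_nonneg _) hfg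
  have hsf : Summable f := hnormsum.of_norm
  have hexp : NormedSpace.exp B u = ∑' n, f n := by
    have hTsum : Summable (fun n : ℕ => ((n.factorial : ℂ))⁻¹ • B ^ n) :=
      NormedSpace.expSeries_summable' (𝕂 := ℂ) B
    rw [NormedSpace.exp_eq_tsum ℂ]
    have := (ContinuousLinearMap.apply ℂ H u).map_tsum hTsum
    simpa [hf] using this
  have hsplit : NormedSpace.exp B u - ∑ n ∈ Finset.range N, f n = ∑' n, f (n + N) := by
    rw [hexp, ← Summable.sum_add_tsum_nat_add N hsf]
    abel
  rw [hsplit]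
  have hfact : ∀ n : ℕ, ((N.factorial * n.factorial : ℕ) : ℝ) ≤ ((n + N).factorial : ℕ) := by
    intro n
    exact_mod_cast Nat.le_of_dvd (Nat.factorial_pos _)
      (Nat.add_comm N n ▸ Nat.factorial_mul_factorial_dvd_factorial_add N n)
  have hle2 : ∀ n : ℕ, ‖f (n + N)‖ ≤ ‖B‖ ^ N / N.factorial * (‖B‖ ^ n / n.factorial) * ‖u‖ := by
    intro n
    refine (hfg (n + N)).trans ?_
    have h1 : ‖B‖ ^ (n + N) / ((n + N).factorial : ℝ)
        ≤ ‖B‖ ^ (n + N) / ((N.factorial * n.factorial : ℕ) : ℝ) := by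
      apply div_le_div_of_nonneg_left (pow_nonneg (norm_nonneg _) _) _ (hfact n)
      exact_mod_cast Nat.mul_pos (Nat.factorial_pos _) (Nat.factorial_pos _)
    refine (mul_le_mul_of_nonneg_right h1 (norm_nonneg u)).trans (le_of_eq ?_)
    rw [pow_add]
    push_cast
    ring
  calc ‖∑' n, f (n + N)‖ ≤ ∑' n, ‖f (n + N)‖ :=
        norm_tsum_le_tsum_norm ((summable_nat_add_iff N).2 hnormsum)
    _ ≤ ∑' n, ‖B‖ ^ N / N.factorial * (‖B‖ ^ n / n.factorial) * ‖u‖ := by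
        refine Summable.tsum_le_tsum hle2 ((summable_nat_add_iff N).2 hnormsum) ?_
        exact ((Real.summable_pow_div_factorial ‖B‖).mul_left _).mul_right _
    _ = ‖B‖ ^ N / N.factorial * Real.exp ‖B‖ * ‖u‖ := by
        rw [tsum_mul_right, tsum_mul_left]
        congr 2
        rw [Real.exp_eq_exp_ℝ, NormedSpace.exp_eq_tsum_div]

lemma pow_abs_aux {s cc : ℝ} (hcc : 0 < cc) (hs : cc ≤ |s|) (m : ℕ) {n M : ℕ}
    (hn : n ≤ M) (hm : m ≤ M) :
    |s| ^ n ≤ max 1 (cc⁻¹ ^ m) * (|s| ^ m + |s| ^ M) := by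
  have h0 : (0:ℝ) ≤ |s| := abs_nonneg s
  rcases le_or_gt 1 |s| with h | h
  · have h1 : |s| ^ n ≤ |s| ^ M := pow_le_pow_right₀ h hn
    nlinarith [le_max_left (1:ℝ) (cc⁻¹ ^ m), pow_nonneg h0 M, pow_nonneg h0 m,
      pow_nonneg h0 n]
  · have h1 : |s| ^ n ≤ 1 := pow_le_one₀ h0 h.le
    have hsc : (1:ℝ) ≤ cc⁻¹ * |s| := by
      rw [inv_mul_eq_div]
      exact (one_le_div hcc).2 hs
    have h2 : (1:ℝ) ≤ cc⁻¹ ^ m * |s| ^ m := by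
      rw [← mul_pow]
      calc (1:ℝ) = 1 ^ m := (one_pow m).symm
        _ ≤ (cc⁻¹ * |s|) ^ m := pow_le_pow_left₀ zero_le_one hsc m
    calc |s| ^ n ≤ cc⁻¹ ^ m * |s| ^ m := h1.trans h2
      _ ≤ max 1 (cc⁻¹ ^ m) * (|s| ^ m + |s| ^ M) := by
        refine mul_le_mul (le_max_right _ _) (le_add_of_nonneg_right (pow_nonneg h0 M))
          (pow_nonneg h0 m) (le_trans zero_le_one (le_max_left _ _))

set_option maxHeartbeats 2000000 in
lemma key {H : Type*} [NormedAddCommGroup H] [NormedSpace ℂ H] [CompleteSpace H]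
    (B : H →L[ℂ] H) (u : H)
    (ψ : SchwartzMap ℝ ℂ) (hψmass : (∫ σ : ℝ, ψ σ) = 1)
    (hψmom : ∀ k : ℕ, 1 ≤ k → (∫ σ : ℝ, (σ : ℂ) ^ k * ψ σ) = 0)
    (c : ℝ) (hc : 0 < c) (φ : ℝ → ℂ)
    (hφcont : Continuous φ) (hφbdd : BddAbove (Set.range fun s : ℝ => ‖φ s‖))
    (hφsupp : Function.support φ ⊆ Set.Icc (-(2 * c)) (2 * c))
    (hφ1 : ∀ s ∈ Set.Ioo (-c) c, φ s = 1) (m : ℕ) :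
    ∃ K : ℝ, ∀ ε ∈ Set.Ioc (0:ℝ) 1,
      ‖(∫ σ : ℝ, (φ (ε * σ) * ψ σ) • NormedSpace.exp (((ε * σ : ℝ) : ℂ) • B) u) - u‖
        ≤ K * ε ^ m := by
  obtain ⟨M0, hM0mem⟩ := hφbdd
  have hM0 : ∀ s : ℝ, ‖φ s‖ ≤ M0 := fun s => hM0mem ⟨s, rfl⟩
  have hM0one : (1:ℝ) ≤ M0 := by
    have h1 := hM0 0
    rw [hφ1 0 ⟨by linarith, hc⟩] at h1
    simpa using h1
  set N : ℕ := m + 1 with hN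
  set R : ℝ → H := fun s => φ s • NormedSpace.exp ((s : ℂ) • B) u -
      ∑ n ∈ Finset.range N, (((s : ℂ)) ^ n * ((n.factorial : ℂ))⁻¹) • (B ^ n) u with hR
  -- rewrite of smul-pow applied terms
  have hXn : ∀ (s : ℝ) (n : ℕ), ((n.factorial : ℂ))⁻¹ • ((((s : ℂ)) • B) ^ n) u
      = (((s : ℂ)) ^ n * ((n.factorial : ℂ))⁻¹) • (B ^ n) u := by
    intro s n
    rw [smul_pow, ContinuousLinearMap.smul_apply, smul_smul, mul_comm]
  have hXnorm : ∀ s : ℝ, ‖((s : ℂ)) • B‖ = |s| * ‖B‖ := by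
    intro s
    rw [norm_smul ((s:ℂ)) B, Complex.norm_real, Real.norm_eq_abs]
  -- constants
  set K1 : ℝ := ‖B‖ ^ N / (N.factorial : ℝ) * Real.exp (c * ‖B‖) * ‖u‖ with hK1
  set D : ℝ := ∑ n ∈ Finset.range N, ((n.factorial : ℝ))⁻¹ * ‖(B ^ n) u‖ with hD
  set C2 : ℝ := M0 * Real.exp (2 * c * ‖B‖) * ‖u‖ with hC2
  set K2 : ℝ := (C2 + D) * max 1 (c⁻¹ ^ m) with hK2
  set K : ℝ := K1 + K2 with hK
  have hDnn : 0 ≤ D := Finset.sum_nonneg fun n _ => by positivity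
  have hC2nn : 0 ≤ C2 := by
    have : (0:ℝ) ≤ M0 := le_trans zero_le_one hM0one
    positivity
  have hK1nn : 0 ≤ K1 := by positivity
  have hK2nn : 0 ≤ K2 := by positivity
  have hKnn : 0 ≤ K := by positivity
  -- pointwise bound on R
  have hRb : ∀ s : ℝ, ‖R s‖ ≤ K * (|s| ^ m + |s| ^ (m + N)) := by
    intro s
    have h0s : (0:ℝ) ≤ |s| := abs_nonneg s
    have hsum_nn : (0:ℝ) ≤ |s| ^ m + |s| ^ (m + N) := by positivity
    rcases lt_or_ge |s| c with hs | hs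
    · -- |s| < c : Taylor remainder
      have hφs : φ s = 1 := hφ1 s (Set.mem_Ioo.2 (abs_lt.1 hs))
      have h1 : R s = NormedSpace.exp (((s : ℂ)) • B) u -
          ∑ n ∈ Finset.range N, ((n.factorial : ℂ))⁻¹ • ((((s : ℂ)) • B) ^ n) u := by
        rw [hR]
        simp only [hφs, one_smul]
        congr 1
        exact (Finset.sum_congr rfl fun n _ => hXn s n).symm
      rw [h1]
      refine (exp_apply_rem _ u N).trans ?_
      rw [hXnorm]
      have hb1 : (|s| * ‖B‖) ^ N / (N.factorial : ℝ) * Real.exp (|s| * ‖B‖) * ‖u‖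
          ≤ K1 * |s| ^ N := by
        rw [hK1, mul_pow]
        have he : Real.exp (|s| * ‖B‖) ≤ Real.exp (c * ‖B‖) :=
          Real.exp_le_exp.2 (by nlinarith [norm_nonneg B])
        calc |s| ^ N * ‖B‖ ^ N / (N.factorial : ℝ) * Real.exp (|s| * ‖B‖) * ‖u‖
            ≤ |s| ^ N * ‖B‖ ^ N / (N.factorial : ℝ) * Real.exp (c * ‖B‖) * ‖u‖ := by
              gcongr
          _ = ‖B‖ ^ N / (N.factorial : ℝ) * Real.exp (c * ‖B‖) * ‖u‖ * |s| ^ N := by ring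
      refine hb1.trans ?_
      have hsN : |s| ^ N ≤ |s| ^ m + |s| ^ (m + N) := by
        rcases le_or_gt 1 |s| with h | h
        · have : |s| ^ N ≤ |s| ^ (m + N) := pow_le_pow_right₀ h (by omega)
          nlinarith [pow_nonneg h0s m]
        · have : |s| ^ N ≤ |s| ^ m := pow_le_pow_of_le_one h0s h.le (by omega)
          nlinarith [pow_nonneg h0s (m + N)]
      calc K1 * |s| ^ N ≤ K1 * (|s| ^ m + |s| ^ (m + N)) := by gcongr
        _ ≤ K * (|s| ^ m + |s| ^ (m + N)) := by
            rw [hK]; nlinarith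
    · -- c ≤ |s| : crude bound
      have haux : ∀ {n : ℕ}, n ≤ m + N → |s| ^ n ≤ max 1 (c⁻¹ ^ m) * (|s| ^ m + |s| ^ (m + N)) :=
        fun {n} hn => pow_abs_aux hc hs m hn (by omega)
      have hbφ : ‖φ s • NormedSpace.exp (((s : ℂ)) • B) u‖
          ≤ C2 * (max 1 (c⁻¹ ^ m) * (|s| ^ m + |s| ^ (m + N))) := by
        by_cases hφ0 : φ s = 0
        · rw [hφ0, zero_smul, norm_zero]
          have := haux (n := 0) (by omega)
          positivity
        · have hsupp := hφsupp (Function.mem_support.2 hφ0)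
          have hs2c : |s| ≤ 2 * c := abs_le.2 ⟨by linarith [hsupp.1], hsupp.2⟩
          have hexp : ‖NormedSpace.exp (((s : ℂ)) • B) u‖ ≤ Real.exp (2 * c * ‖B‖) * ‖u‖ := by
            have h := exp_apply_rem (((s : ℂ)) • B) u 0
            simp only [Finset.range_zero, Finset.sum_empty, sub_zero, pow_zero,
              Nat.factorial_zero, Nat.cast_one, div_one, one_mul] at h
            refine h.trans ?_
            rw [hXnorm]
            have : Real.exp (|s| * ‖B‖) ≤ Real.exp (2 * c * ‖B‖) :=
              Real.exp_le_exp.2 (by nlinarith [norm_nonneg B])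
            gcongr
          have h1le : (1:ℝ) ≤ max 1 (c⁻¹ ^ m) * (|s| ^ m + |s| ^ (m + N)) := by
            have := haux (n := 0) (by omega)
            simpa using this
          calc ‖φ s • NormedSpace.exp (((s : ℂ)) • B) u‖
              = ‖φ s‖ * ‖NormedSpace.exp (((s : ℂ)) • B) u‖ := norm_smul _ _
            _ ≤ M0 * (Real.exp (2 * c * ‖B‖) * ‖u‖) := by
                refine mul_le_mul (hM0 s) hexp (norm_nonneg _) (le_trans zero_le_one hM0one)
            _ = C2 := by rw [hC2]; ring
            _ = C2 * 1 := (mul_one _).symm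
            _ ≤ C2 * (max 1 (c⁻¹ ^ m) * (|s| ^ m + |s| ^ (m + N))) := by gcongr
      have hbsum : ‖∑ n ∈ Finset.range N, (((s : ℂ)) ^ n * ((n.factorial : ℂ))⁻¹) • (B ^ n) u‖
          ≤ D * (max 1 (c⁻¹ ^ m) * (|s| ^ m + |s| ^ (m + N))) := by
        refine (norm_sum_le _ _).trans ?_
        rw [hD, Finset.sum_mul]
        refine Finset.sum_le_sum fun n hn => ?_
        rw [norm_smul, norm_mul, norm_pow, norm_inv, Complex.norm_real,
          Complex.norm_natCast, Real.norm_eq_abs]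
        have hnle : n ≤ m + N := by
          have := Finset.mem_range.1 hn; omega
        calc |s| ^ n * ((n.factorial : ℝ))⁻¹ * ‖(B ^ n) u‖
            ≤ (max 1 (c⁻¹ ^ m) * (|s| ^ m + |s| ^ (m + N))) * ((n.factorial : ℝ))⁻¹
                * ‖(B ^ n) u‖ := by
              gcongr
              exact haux hnle
          _ = ((n.factorial : ℝ))⁻¹ * ‖(B ^ n) u‖ * (max 1 (c⁻¹ ^ m)
                * (|s| ^ m + |s| ^ (m + N))) := by ring
      calc ‖R s‖ ≤ ‖φ s • NormedSpace.exp (((s : ℂ)) • B) u‖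
            + ‖∑ n ∈ Finset.range N, (((s : ℂ)) ^ n * ((n.factorial : ℂ))⁻¹) • (B ^ n) u‖ := by
            rw [hR]; exact norm_sub_le _ _
        _ ≤ (C2 + D) * (max 1 (c⁻¹ ^ m) * (|s| ^ m + |s| ^ (m + N))) := by
            rw [add_mul]; exact add_le_add hbφ hbsum
        _ = K2 * (|s| ^ m + |s| ^ (m + N)) := by rw [hK2]; ring
        _ ≤ K * (|s| ^ m + |s| ^ (m + N)) := by rw [hK]; nlinarith
    -- integrability of the weight integrals
  have hint1 : Integrable (fun σ : ℝ => ‖σ‖ ^ m * ‖ψ σ‖) := ψ.integrable_pow_mul volume m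
  have hint2 : Integrable (fun σ : ℝ => ‖σ‖ ^ (m + N) * ‖ψ σ‖) :=
    ψ.integrable_pow_mul volume (m + N)
  have hI1nn : 0 ≤ ∫ σ : ℝ, ‖σ‖ ^ m * ‖ψ σ‖ := integral_nonneg fun σ => by positivity
  have hI2nn : 0 ≤ ∫ σ : ℝ, ‖σ‖ ^ (m + N) * ‖ψ σ‖ := integral_nonneg fun σ => by positivity
  refine ⟨K * ((∫ σ : ℝ, ‖σ‖ ^ m * ‖ψ σ‖) + ∫ σ : ℝ, ‖σ‖ ^ (m + N) * ‖ψ σ‖),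
    fun ε hε => ?_⟩
  obtain ⟨hε0, hε1⟩ := hε
  -- integrability of the main integrand
  have hcont1 : Continuous fun σ : ℝ =>
      (φ (ε * σ) * ψ σ) • NormedSpace.exp (((ε * σ : ℝ) : ℂ) • B) u := by
    apply Continuous.smul
    · exact (hφcont.comp (continuous_const.mul continuous_id)).mul ψ.continuous
    · exact (ContinuousLinearMap.apply ℂ H u).continuous.comp
        ((show Continuous (NormedSpace.exp : (H →L[ℂ] H) → (H →L[ℂ] H)) from
          continuous_iff_continuousAt.2 fun x => (NormedSpace.exp_analytic (𝕂 := ℂ) x).continuousAt).comp ((Complex.continuous_ofReal.comp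
          (continuous_const.mul continuous_id)).smul continuous_const))
  have hsupport1 : ∀ σ : ℝ, σ ∉ Set.Icc (-(2 * c) / ε) (2 * c / ε) →
      (φ (ε * σ) * ψ σ) • NormedSpace.exp (((ε * σ : ℝ) : ℂ) • B) u = 0 := by
    intro σ hσ
    have hφ0 : φ (ε * σ) = 0 := by
      by_contra h
      have hmem := hφsupp (Function.mem_support.2 h)
      refine hσ ⟨?_, ?_⟩
      · rw [div_le_iff₀ hε0]; nlinarith [hmem.1]
      · rw [le_div_iff₀ hε0]; nlinarith [hmem.2]
    rw [hφ0, zero_mul, zero_smul]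
  have hI1 : Integrable (fun σ : ℝ =>
      (φ (ε * σ) * ψ σ) • NormedSpace.exp (((ε * σ : ℝ) : ℂ) • B) u) :=
    hcont1.integrable_of_hasCompactSupport
      (HasCompactSupport.intro isCompact_Icc hsupport1)
  have hI2 : ∀ n : ℕ, Integrable (fun σ : ℝ =>
      (ψ σ * ((ε * σ : ℝ) : ℂ) ^ n * ((n.factorial : ℂ))⁻¹) • (B ^ n) u) := by
    intro n
    apply Integrable.smul_const
    have hb : Integrable (fun σ : ℝ => (ε ^ n * ((n.factorial : ℝ))⁻¹) * (‖σ‖ ^ n * ‖ψ σ‖)) :=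
      (ψ.integrable_pow_mul volume n).const_mul _
    refine hb.mono' ?_ ?_
    · refine Continuous.aestronglyMeasurable ?_
      exact (ψ.continuous.mul ((Complex.continuous_ofReal.comp
        (continuous_const.mul continuous_id)).pow n)).mul continuous_const
    · refine Filter.Eventually.of_forall fun σ => ?_
      rw [norm_mul, norm_mul, norm_pow, norm_inv, Complex.norm_natCast, Complex.norm_real,
        Real.norm_eq_abs, Real.norm_eq_abs, abs_mul, abs_of_pos hε0]
      refine le_of_eq ?_
      rw [mul_pow]
      ring
  -- moments
  have hmoment : ∀ n : ℕ, (∫ σ : ℝ, ψ σ * ((ε * σ : ℝ) : ℂ) ^ n * ((n.factorial : ℂ))⁻¹)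
      = if n = 0 then 1 else 0 := by
    intro n
    have hrw : (fun σ : ℝ => ψ σ * ((ε * σ : ℝ) : ℂ) ^ n * ((n.factorial : ℂ))⁻¹)
        = fun σ : ℝ => (((ε : ℝ) : ℂ) ^ n * ((n.factorial : ℂ))⁻¹) * ((σ : ℂ) ^ n * ψ σ) := by
      funext σ; push_cast; ring
    rw [hrw, integral_const_mul]
    rcases Nat.eq_zero_or_pos n with h0 | hpos
    · subst h0
      simp [hψmass]
    · rw [hψmom n hpos, mul_zero, if_neg (Nat.pos_iff_ne_zero.1 hpos)]
  have hsumint : (∫ σ : ℝ, ∑ n ∈ Finset.range N,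
      (ψ σ * ((ε * σ : ℝ) : ℂ) ^ n * ((n.factorial : ℂ))⁻¹) • (B ^ n) u) = u := by
    rw [integral_finset_sum _ fun n _ => hI2 n]
    have hterm : ∀ n ∈ Finset.range N,
        (∫ σ : ℝ, (ψ σ * ((ε * σ : ℝ) : ℂ) ^ n * ((n.factorial : ℂ))⁻¹) • (B ^ n) u)
          = (if n = 0 then (1 : ℂ) else 0) • (B ^ n) u := by
      intro n _
      rw [integral_smul_const, hmoment n]
    rw [Finset.sum_congr rfl hterm,
      Finset.sum_eq_single_of_mem 0 (Finset.mem_range.2 (by omega))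
        (fun b _ hb => by rw [if_neg hb, zero_smul])]
    simp
  -- pointwise identity
  have hptwise : ∀ σ : ℝ, ψ σ • R (ε * σ)
      = (φ (ε * σ) * ψ σ) • NormedSpace.exp (((ε * σ : ℝ) : ℂ) • B) u
        - ∑ n ∈ Finset.range N,
            (ψ σ * ((ε * σ : ℝ) : ℂ) ^ n * ((n.factorial : ℂ))⁻¹) • (B ^ n) u := by
    intro σ
    rw [hR]
    simp only
    rw [smul_sub, smul_smul, mul_comm (ψ σ) (φ (ε * σ)), Finset.smul_sum]
    congr 1
    refine Finset.sum_congr rfl fun n _ => ?_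
    rw [smul_smul, ← mul_assoc]
  have hkey : (∫ σ : ℝ, (φ (ε * σ) * ψ σ) • NormedSpace.exp (((ε * σ : ℝ) : ℂ) • B) u) - u
      = ∫ σ : ℝ, ψ σ • R (ε * σ) := by
    rw [integral_congr_ae (Filter.Eventually.of_forall hptwise),
      integral_sub hI1 (integrable_finset_sum _ fun n _ => hI2 n), hsumint]
  rw [hkey]
  -- final estimate
  have hbound : ∀ σ : ℝ, ‖ψ σ • R (ε * σ)‖
      ≤ K * (ε ^ m * (‖σ‖ ^ m * ‖ψ σ‖) + ε ^ (m + N) * (‖σ‖ ^ (m + N) * ‖ψ σ‖)) := by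
    intro σ
    rw [norm_smul]
    have habs : |ε * σ| = ε * |σ| := by rw [abs_mul, abs_of_pos hε0]
    calc ‖ψ σ‖ * ‖R (ε * σ)‖
        ≤ ‖ψ σ‖ * (K * (|ε * σ| ^ m + |ε * σ| ^ (m + N))) :=
          mul_le_mul_of_nonneg_left (hRb (ε * σ)) (norm_nonneg _)
      _ = K * (ε ^ m * (‖σ‖ ^ m * ‖ψ σ‖) + ε ^ (m + N) * (‖σ‖ ^ (m + N) * ‖ψ σ‖)) := by
          rw [habs, mul_pow, mul_pow, Real.norm_eq_abs]
          ring
  have hgint : Integrable (fun σ : ℝ =>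
      K * (ε ^ m * (‖σ‖ ^ m * ‖ψ σ‖) + ε ^ (m + N) * (‖σ‖ ^ (m + N) * ‖ψ σ‖))) :=
    (((hint1.const_mul _).add (hint2.const_mul _)).const_mul K)
  refine (norm_integral_le_of_norm_le hgint (Filter.Eventually.of_forall hbound)).trans ?_
  rw [integral_const_mul, integral_add (hint1.const_mul _) (hint2.const_mul _),
    integral_const_mul, integral_const_mul]
  have hpow : ε ^ (m + N) ≤ ε ^ m := pow_le_pow_of_le_one hε0.le hε1 (by omega)
  calc K * (ε ^ m * (∫ σ : ℝ, ‖σ‖ ^ m * ‖ψ σ‖)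
        + ε ^ (m + N) * ∫ σ : ℝ, ‖σ‖ ^ (m + N) * ‖ψ σ‖)
      ≤ K * (ε ^ m * (∫ σ : ℝ, ‖σ‖ ^ m * ‖ψ σ‖)
        + ε ^ m * ∫ σ : ℝ, ‖σ‖ ^ (m + N) * ‖ψ σ‖) := by gcongr
    _ = K * ((∫ σ : ℝ, ‖σ‖ ^ m * ‖ψ σ‖) + ∫ σ : ℝ, ‖σ‖ ^ (m + N) * ‖ψ σ‖) * ε ^ m := by
        ring


/-- The operator cosine family `cos (s A) = (exp (i s A) + exp (-i s A)) / 2` of a bounded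
operator `A` on a complex Hilbert space. -/
noncomputable def opCos {H : Type*} [NormedAddCommGroup H] [InnerProductSpace ℂ H]
    [CompleteSpace H] (A : H →L[ℂ] H) (s : ℝ) : H →L[ℂ] H :=
  (2 : ℂ)⁻¹ • (NormedSpace.exp (((s : ℂ) * Complex.I) • A) +
    NormedSpace.exp ((-(s : ℂ) * Complex.I) • A))

/-- The regularization operator `T_ε = ∫ φ(s) ε⁻¹ ψ(s/ε) cos (s A) ds`. -/
noncomputable def regOp {H : Type*} [NormedAddCommGroup H] [InnerProductSpace ℂ H]
    [CompleteSpace H] (A : H →L[ℂ] H) (φ : ℝ → ℂ) (ψ : ℝ → ℂ) (ε : ℝ) : H →L[ℂ] H :=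
  ∫ s : ℝ, (φ s * (ε : ℂ)⁻¹ * ψ (s / ε)) • opCos A s

set_option maxHeartbeats 2000000 in
/-- **negligibility of the error.** If the Schwartz profile `ψ` has unit mass
and all higher moments vanishing, and the bounded continuous cutoff `φ` is supported in
`[-2c, 2c]` and equals `1` on `(-c, c)`, then for every `u ∈ H` and every `m ∈ ℕ`,
`‖T_ε u - u‖ = O(ε^m)` as `ε → 0⁺`. -/
theorem stmt11 {H : Type*} [NormedAddCommGroup H] [InnerProductSpace ℂ H] [CompleteSpace H]
    (A : H →L[ℂ] H) (hA : IsSelfAdjoint A)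
    (ψ : SchwartzMap ℝ ℂ) (hψmass : (∫ σ : ℝ, ψ σ) = 1)
    (hψmom : ∀ k : ℕ, 1 ≤ k → (∫ σ : ℝ, (σ : ℂ) ^ k * ψ σ) = 0)
    (c : ℝ) (hc : 0 < c) (φ : ℝ → ℂ)
    (hφcont : Continuous φ) (hφbdd : BddAbove (Set.range fun s : ℝ => ‖φ s‖))
    (hφsupp : Function.support φ ⊆ Set.Icc (-(2 * c)) (2 * c))
    (hφ1 : ∀ s ∈ Set.Ioo (-c) c, φ s = 1) :
    ∀ (u : H) (m : ℕ),
      (fun ε : ℝ => ‖regOp A φ (⇑ψ) ε u - u‖) =O[𝓝[>] (0 : ℝ)] fun ε : ℝ => ε ^ m := by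
  intro u m
  set B₁ : H →L[ℂ] H := Complex.I • A with hB₁
  set B₂ : H →L[ℂ] H := (-Complex.I) • A with hB₂
  obtain ⟨K₁, hK₁⟩ := key B₁ u ψ hψmass hψmom c hc φ hφcont hφbdd hφsupp hφ1 m
  obtain ⟨K₂, hK₂⟩ := key B₂ u ψ hψmass hψmom c hc φ hφcont hφbdd hφsupp hφ1 m
  rw [isBigO_iff]
  refine ⟨2⁻¹ * (K₁ + K₂), ?_⟩
  filter_upwards [Ioc_mem_nhdsGT_of_mem (Set.mem_Ico.2 ⟨le_refl (0:ℝ), zero_lt_one⟩)]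
    with ε hε
  obtain ⟨hε0, hε1⟩ := hε
  have hεne : ε ≠ 0 := ne_of_gt hε0
  have hεcne : ((ε : ℝ) : ℂ) ≠ 0 := Complex.ofReal_ne_zero.2 hεne
  -- scalar coefficient
  set a : ℝ → ℂ := fun s => φ s * (ε : ℂ)⁻¹ * ψ (s / ε) with ha
  have hacont : Continuous a :=
    (hφcont.mul continuous_const).mul (ψ.continuous.comp (continuous_id.div_const ε))
  have hazero : ∀ s : ℝ, s ∉ Set.Icc (-(2 * c)) (2 * c) → a s = 0 := by
    intro s hs
    have hφ0 : φ s = 0 := by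
      by_contra h
      exact hs (hφsupp (Function.mem_support.2 h))
    rw [ha]; simp [hφ0]
  -- vector integrands
  set f₁ : ℝ → H := fun s => a s • NormedSpace.exp (((s : ℝ) : ℂ) • B₁) u with hf₁
  set f₂ : ℝ → H := fun s => a s • NormedSpace.exp (((s : ℝ) : ℂ) • B₂) u with hf₂
  have hexpcont : ∀ B : H →L[ℂ] H,
      Continuous fun s : ℝ => NormedSpace.exp (((s : ℝ) : ℂ) • B) u := by
    intro B
    exact (ContinuousLinearMap.apply ℂ H u).continuous.comp
      ((show Continuous (NormedSpace.exp : (H →L[ℂ] H) → (H →L[ℂ] H)) from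
          continuous_iff_continuousAt.2 fun x => (NormedSpace.exp_analytic (𝕂 := ℂ) x).continuousAt).comp (Complex.continuous_ofReal.smul continuous_const))
  have hf₁I : Integrable f₁ := by
    refine (hacont.smul (hexpcont B₁)).integrable_of_hasCompactSupport
      (HasCompactSupport.intro (isCompact_Icc (a := -(2*c)) (b := 2*c)) fun s hs => ?_)
    simp [hazero s hs]
  have hf₂I : Integrable f₂ := by
    refine (hacont.smul (hexpcont B₂)).integrable_of_hasCompactSupport
      (HasCompactSupport.intro (isCompact_Icc (a := -(2*c)) (b := 2*c)) fun s hs => ?_)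
    simp [hazero s hs]
  have hFcont : Continuous fun s : ℝ => a s • opCos A s := by
    refine hacont.smul ?_
    unfold opCos
    refine (continuous_const (y := (2 : ℂ)⁻¹)).smul (Continuous.add ?_ ?_)
    · exact (show Continuous (NormedSpace.exp : (H →L[ℂ] H) → (H →L[ℂ] H)) from
          continuous_iff_continuousAt.2 fun x => (NormedSpace.exp_analytic (𝕂 := ℂ) x).continuousAt).comp
        ((Complex.continuous_ofReal.mul continuous_const).smul continuous_const)
    · exact (show Continuous (NormedSpace.exp : (H →L[ℂ] H) → (H →L[ℂ] H)) from
          continuous_iff_continuousAt.2 fun x => (NormedSpace.exp_analytic (𝕂 := ℂ) x).continuousAt).comp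
        (((Complex.continuous_ofReal.neg).mul continuous_const).smul continuous_const)
  have hFI : Integrable (fun s : ℝ => a s • opCos A s) := by
    refine hFcont.integrable_of_hasCompactSupport
      (HasCompactSupport.intro (isCompact_Icc (a := -(2*c)) (b := 2*c)) fun s hs => ?_)
    simp [hazero s hs]
  -- opCos applied pointwise
  have hopCos : ∀ s : ℝ, opCos A s u
      = (2 : ℂ)⁻¹ • (NormedSpace.exp (((s : ℝ) : ℂ) • B₁) u
          + NormedSpace.exp (((s : ℝ) : ℂ) • B₂) u) := by
    intro s
    have h1 : ((s : ℂ) * Complex.I) • A = ((s : ℝ) : ℂ) • B₁ := by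
      rw [hB₁, smul_smul]
    have h2 : (-(s : ℂ) * Complex.I) • A = ((s : ℝ) : ℂ) • B₂ := by
      rw [hB₂, smul_smul]
      congr 1
      ring
    rw [opCos, h1, h2]
    simp [ContinuousLinearMap.smul_apply, ContinuousLinearMap.add_apply]
  -- regOp applied to u
  have hreg : regOp A φ (⇑ψ) ε u = (2 : ℂ)⁻¹ • ((∫ s, f₁ s) + ∫ s, f₂ s) := by
    rw [regOp]
    rw [ContinuousLinearMap.integral_apply hFI u]
    have hpt : ∀ s : ℝ, (a s • opCos A s) u = (2 : ℂ)⁻¹ • (f₁ s + f₂ s) := by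
      intro s
      rw [ContinuousLinearMap.smul_apply, hopCos s, hf₁, hf₂]
      simp only
      module
    rw [integral_congr_ae (Filter.Eventually.of_forall hpt), integral_smul,
      integral_add hf₁I hf₂I]
  -- change of variables
  have hchg : ∀ (B : H →L[ℂ] H),
      (∫ s : ℝ, a s • NormedSpace.exp (((s : ℝ) : ℂ) • B) u)
        = ∫ σ : ℝ, (φ (ε * σ) * ψ σ) • NormedSpace.exp (((ε * σ : ℝ) : ℂ) • B) u := by
    intro B
    set g : ℝ → H := fun s => a s • NormedSpace.exp (((s : ℝ) : ℂ) • B) u with hg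
    have h := Measure.integral_comp_mul_left g ε
    have h2 : (∫ s, g s) = ε • ∫ x : ℝ, g (ε * x) := by
      rw [h, abs_of_pos (inv_pos.2 hε0), smul_smul, mul_inv_cancel₀ hεne, one_smul]
    rw [h2, ← integral_smul]
    refine integral_congr_ae (Filter.Eventually.of_forall fun σ => ?_)
    rw [hg]
    simp only
    rw [ha]
    simp only
    rw [mul_div_cancel_left₀ σ hεne, ← smul_assoc]
    congr 1
    rw [Complex.real_smul]
    field_simp
  have hG₁ := hchg B₁
  have hG₂ := hchg B₂
  -- final bound
  have heq : regOp A φ (⇑ψ) ε u - u = (2 : ℂ)⁻¹ •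
      (((∫ σ : ℝ, (φ (ε * σ) * ψ σ) • NormedSpace.exp (((ε * σ : ℝ) : ℂ) • B₁) u) - u)
        + ((∫ σ : ℝ, (φ (ε * σ) * ψ σ) • NormedSpace.exp (((ε * σ : ℝ) : ℂ) • B₂) u) - u)) := by
    rw [hreg, hG₁, hG₂]
    module
  rw [heq]
  have hb₁ := hK₁ ε ⟨hε0, hε1⟩
  have hb₂ := hK₂ ε ⟨hε0, hε1⟩
  have hnorm2 : ‖((2 : ℂ))⁻¹‖ = 2⁻¹ := by
    rw [norm_inv]
    norm_num
  rw [norm_norm, norm_smul, hnorm2, Real.norm_eq_abs, abs_of_nonneg (pow_nonneg hε0.le m)]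
  calc (2:ℝ)⁻¹ * ‖_ + _‖ ≤ 2⁻¹ * (K₁ * ε ^ m + K₂ * ε ^ m) := by
        refine mul_le_mul_of_nonneg_left ((norm_add_le _ _).trans (add_le_add hb₁ hb₂))
          (by norm_num)
    _ = 2⁻¹ * (K₁ + K₂) * ε ^ m := by ring
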